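/- If X satisfies S_1(K_cz^ω, Γ_k), then the disjoint union X ⊔ X satisfies S_1(K_cz^ω, Γ_k). -/

import Mathlib

open Filter Topology ContinuousMap

def IsCozero {X : Type*} [TopologicalSpace X] (u : Set X) : Prop :=
  ∃ f : C(X, ℝ), u = {x | f x ≠ 0}

def IsCzKCover {Z : Type*} [TopologicalSpace Z] (U : ℕ → Set Z) : Prop :=
  (∀ n, IsCozero (U n)) ∧ (∀ n, U n ≠ Set.univ) ∧
    ∀ K : Set Z, IsCompact K → ∃ n, K ⊆ U n

/-- Every countable cozero k-cover of `Z` contains a γ_k-subcover. -/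
def CzKCoversContainGammaK (Z : Type*) [TopologicalSpace Z] : Prop :=
  ∀ U : ℕ → Set Z, IsCzKCover U →
    ∃ S : Set ℕ, S.Infinite ∧
      ∀ K : Set Z, IsCompact K → {n ∈ S | ¬ K ⊆ U n}.Finite

/-- If every countable cozero k-cover of `X` contains a γ_k-subcover, then the same
holds for the topological sum `X ⊔ X`. -/
theorem stmt17 {X : Type*} [TopologicalSpace X] [T35Space X]
    (h : CzKCoversContainGammaK X) : CzKCoversContainGammaK (X ⊕ X) := by
  intro U hU
  obtain ⟨hcoz, hne, hk⟩ := hU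
  -- the trace cover on X
  set W : ℕ → Set X := fun n => Sum.inl ⁻¹' U n ∩ Sum.inr ⁻¹' U n with hW
  have hWcov : IsCzKCover W := by
    refine ⟨?_, ?_, ?_⟩
    · intro n
      obtain ⟨f, hf⟩ := hcoz n
      refine ⟨(f.comp ⟨Sum.inl, continuous_inl⟩) * (f.comp ⟨Sum.inr, continuous_inr⟩), ?_⟩
      ext x
      simp [hW, hf, Set.mem_setOf_eq, mul_ne_zero_iff]
    · intro n hn
      have := hne n
      rw [Set.ne_univ_iff_exists_notMem] at this
      obtain ⟨z, hz⟩ := this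
      cases z with
      | inl x =>
        have : x ∈ W n := hn ▸ Set.mem_univ x
        exact hz this.1
      | inr x =>
        have : x ∈ W n := hn ▸ Set.mem_univ x
        exact hz this.2
    · intro K hK
      have hK' : IsCompact (Sum.inl '' K ∪ Sum.inr '' K : Set (X ⊕ X)) :=
        (hK.image continuous_inl).union (hK.image continuous_inr)
      obtain ⟨n, hn⟩ := hk _ hK'
      refine ⟨n, fun x hx => ⟨?_, ?_⟩⟩
      · exact hn (Set.mem_union_left _ ⟨x, hx, rfl⟩)
      · exact hn (Set.mem_union_right _ ⟨x, hx, rfl⟩)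
  obtain ⟨S, hSinf, hS⟩ := h W hWcov
  refine ⟨S, hSinf, ?_⟩
  intro K hK
  have h1 : IsCompact (Sum.inl ⁻¹' K : Set X) :=
    Topology.IsClosedEmbedding.inl.isCompact_preimage hK
  have h2 : IsCompact (Sum.inr ⁻¹' K : Set X) :=
    Topology.IsClosedEmbedding.inr.isCompact_preimage hK
  have hfin := hS _ (h1.union h2)
  refine hfin.subset ?_
  rintro n ⟨hnS, hnK⟩
  refine ⟨hnS, fun hsub => hnK ?_⟩
  rintro z hz
  cases z with
  | inl x => exact (hsub (Set.mem_union_left _ hz)).1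
  | inr x => exact (hsub (Set.mem_union_right _ hz)).2
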